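/- In the SK iteration with error variance recursion α_i = σ_s²·(σ_η²/(P+σ_η²))^i, the excess-distortion probability at step N satisfies P(ε_N² ≥ d) ≤ 2·Q(exp(−R(d) + N·C(P))), where R(d) = (1/2)ln(σ_s²/d), C(P) = (1/2)ln(1+P/σ_η²), and ε_N ~ N(0, α_N). -/
import Mathlib


open MeasureTheory ProbabilityTheory Real

/-- SK iteration excess-distortion bound:
`P(ε_N² ≥ d) ≤ 2 Q(exp(−R(d) + N·C(P)))` with
`α_N = σs²·(ση²/(P+ση²))^N`, `R(d) = (1/2)ln(σs²/d)`, `C(P) = (1/2)ln(1+P/ση²)`. -/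
theorem stmt_16 (σs2 ση2 P d : ℝ) (hσs : 0 < σs2) (hση : 0 < ση2) (hP : 0 < P)
    (hd : 0 < d) (hdσ : d < σs2) (N : ℕ)
    (αN : ℝ) (hα : αN = σs2 * (ση2 / (P + ση2)) ^ N) :
    ((gaussianReal 0 αN.toNNReal) {x | d ≤ x ^ 2}).toReal
      ≤ 2 * ((gaussianReal 0 1) (Set.Ici
          (Real.exp (-(1 / 2 * Real.log (σs2 / d))
            + (N : ℝ) * (1 / 2 * Real.log (1 + P / ση2)))))).toReal := by
  have hαpos : 0 < αN := by
    rw [hα]; positivity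
  set t : ℝ := Real.exp (-(1 / 2 * Real.log (σs2 / d))
      + (N : ℝ) * (1 / 2 * Real.log (1 + P / ση2))) with htdef
  -- t = sqrt (d / αN)
  have ht : t = Real.sqrt (d / αN) := by
    have h1 : Real.sqrt (d / αN) = Real.exp (Real.log (Real.sqrt (d / αN))) :=
      (Real.exp_log (Real.sqrt_pos.2 (div_pos hd hαpos))).symm
    rw [h1, htdef]
    congr 1
    rw [Real.log_sqrt (by positivity), hα]
    have hr : ση2 / (P + ση2) > 0 := by positivity
    have h2 : 1 + P / ση2 = (ση2 / (P + ση2))⁻¹ := by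
      field_simp
      ring
    rw [Real.log_div hd.ne' (by positivity), Real.log_mul hσs.ne' (by positivity),
      Real.log_pow, Real.log_div hσs.ne' hd.ne', h2, Real.log_inv]
    ring
  have hv : (αN.toNNReal : ℝ) = αN := Real.coe_toNNReal _ hαpos.le
  have hvne : αN.toNNReal ≠ 0 := by
    simp only [ne_eq, ← NNReal.coe_eq_zero, hv]
    exact hαpos.ne'
  set μ := gaussianReal 0 αN.toNNReal with hμ
  have hsd : (0:ℝ) < Real.sqrt d := Real.sqrt_pos.2 hd
  -- set equality
  have hset : {x : ℝ | d ≤ x ^ 2} = Set.Iic (-Real.sqrt d) ∪ Set.Ici (Real.sqrt d) := by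
    ext x
    simp only [Set.mem_setOf_eq, Set.mem_union, Set.mem_Iic, Set.mem_Ici]
    constructor
    · intro h
      have h2 : Real.sqrt d ≤ |x| := by
        have := Real.sqrt_le_sqrt h
        rwa [Real.sqrt_sq_eq_abs] at this
      rcases le_abs.mp h2 with h3 | h3
      · right; exact h3
      · left; linarith
    · rintro (h | h)
      · nlinarith [Real.sq_sqrt hd.le]
      · nlinarith [Real.sq_sqrt hd.le]
  -- symmetry: μ (Iic (-√d)) = μ (Ici √d)
  have hsym : μ (Set.Iic (-Real.sqrt d)) = μ (Set.Ici (Real.sqrt d)) := by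
    have hmap : μ.map (fun x : ℝ => (-1) * x) = μ := by
      rw [hμ, gaussianReal_map_const_mul]
      congr 1
      · ring
      · ext; push_cast; ring
    calc μ (Set.Iic (-Real.sqrt d))
        = (μ.map (fun x : ℝ => (-1) * x)) (Set.Iic (-Real.sqrt d)) := by rw [hmap]
      _ = μ ((fun x : ℝ => (-1) * x) ⁻¹' Set.Iic (-Real.sqrt d)) := by
          rw [Measure.map_apply (by fun_prop) measurableSet_Iic]
      _ = μ (Set.Ici (Real.sqrt d)) := by
          congr 1
          ext x
          simp only [Set.mem_preimage, Set.mem_Iic, Set.mem_Ici]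
          constructor <;> intro h <;> linarith
  -- scaling: μ (Ici √d) = gaussianReal 0 1 (Ici t)
  have hsa : (0:ℝ) < Real.sqrt αN := Real.sqrt_pos.2 hαpos
  have hscale : μ (Set.Ici (Real.sqrt d)) = (gaussianReal 0 1) (Set.Ici t) := by
    have hmap : (gaussianReal 0 1).map (fun x : ℝ => Real.sqrt αN * x) = μ := by
      rw [gaussianReal_map_const_mul, hμ]
      congr 1
      · ring
      · ext; push_cast
        rw [Real.sq_sqrt hαpos.le, hv]; ring
    rw [← hmap, Measure.map_apply (by fun_prop) measurableSet_Ici]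
    congr 1
    ext x
    simp only [Set.mem_preimage, Set.mem_Ici]
    rw [ht]
    constructor
    · intro h
      rw [Real.sqrt_div hd.le, div_le_iff₀ hsa]
      linarith [mul_comm (Real.sqrt αN) x]
    · intro h
      rw [Real.sqrt_div hd.le, div_le_iff₀ hsa] at h
      linarith [mul_comm (Real.sqrt αN) x]
  -- combine
  have hdisj : Disjoint (Set.Iic (-Real.sqrt d)) (Set.Ici (Real.sqrt d)) := by
    rw [Set.Iic_disjoint_Ici]
    intro h
    linarith
  have hmeas : μ {x : ℝ | d ≤ x ^ 2} = 2 * (gaussianReal 0 1) (Set.Ici t) := by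
    rw [hset, measure_union hdisj measurableSet_Ici, hsym, hscale, two_mul]
  rw [hmeas]
  have hfin : (gaussianReal 0 1) (Set.Ici t) ≠ ⊤ := measure_ne_top _ _
  rw [ENNReal.toReal_mul]
  simp
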